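/- Let N ≥ 1, let t_0 < t_1 < ⋯ < t_N be real numbers, let f : ℝ → ℝ be continuously differentiable on [t_0, t_N], and for each 0 ≤ n ≤ N−1 set T_n = t_{n+1} − t_n, s_n = (t_n + t_{n+1})/2, E_n = ∫_{t_n}^{t_{n+1}} f(t)² dt and D_n = ∫_{t_n}^{t_{n+1}} f′(t)² dt. Suppose α > 0 and that the local energy condition T_n² · D_n ≤ α π² E_n holds for every n. Then Σ_{n=0}^{N−1} ∫_{t_n}^{t_{n+1}} (f(t) − f(s_n))² dt ≤ α · ∫_{t_0}^{t_N} f(t)² dt. -/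

import Mathlib

open MeasureTheory intervalIntegral Real

open Set

set_option maxHeartbeats 1000000 in
-- core: sharp Poincaré with value 0 at LEFT endpoint
lemma poincare_left_zero (a b : ℝ) (hab : a < b) (g g' : ℝ → ℝ)
    (hd : ∀ x ∈ Set.Icc a b, HasDerivAt g (g' x) x)
    (hc : ContinuousOn g' (Set.Icc a b)) (hga : g a = 0) :
    (π / (2 * (b - a))) ^ 2 * ∫ x in a..b, (g x) ^ 2 ≤ ∫ x in a..b, (g' x) ^ 2 := by
  have hπ : (0:ℝ) < π := Real.pi_pos
  set L : ℝ := b - a with hL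
  have hL0 : 0 < L := by simp [hL]; linarith
  set c : ℝ := π / (2 * L) with hc0
  have hcpos : 0 < c := by positivity
  have hcL : c * L = π / 2 := by rw [hc0]; field_simp
  -- continuity of g
  have hgc : ContinuousOn g (Set.Icc a b) := fun x hx => ((hd x hx).continuousAt).continuousWithinAt
  -- bounds
  obtain ⟨M, hM⟩ := (isCompact_Icc (a := a) (b := b)).exists_bound_of_continuousOn hc
  obtain ⟨K, hK⟩ := (isCompact_Icc (a := a) (b := b)).exists_bound_of_continuousOn hgc
  have hM0 : 0 ≤ M := le_trans (norm_nonneg _) (hM a (by constructor <;> linarith))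
  have hK0 : 0 ≤ K := le_trans (norm_nonneg _) (hK a (by constructor <;> linarith))
  -- interval integrability of g², g'² on any subinterval of [a,b]
  have hsub : ∀ u v : ℝ, a ≤ u → u ≤ v → v ≤ b → Set.uIcc u v ⊆ Set.Icc a b := by
    intro u v h1 h2 h3
    rw [Set.uIcc_of_le h2]
    exact Set.Icc_subset_Icc h1 h3
  have hig2 : ∀ u v : ℝ, a ≤ u → u ≤ v → v ≤ b →
      IntervalIntegrable (fun x => (g x) ^ 2) volume u v := by
    intro u v h1 h2 h3
    exact ((hgc.mono (hsub u v h1 h2 h3)).pow 2).intervalIntegrable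
  have hig'2 : ∀ u v : ℝ, a ≤ u → u ≤ v → v ≤ b →
      IntervalIntegrable (fun x => (g' x) ^ 2) volume u v := by
    intro u v h1 h2 h3
    exact ((hc.mono (hsub u v h1 h2 h3)).pow 2).intervalIntegrable
  -- the key estimate for each ε
  have key : ∀ ε ∈ Set.Ioo (0:ℝ) L,
      c ^ 2 * ∫ x in a..b, (g x) ^ 2 ≤ (∫ x in a..b, (g' x) ^ 2) + (M^2 + c^2 * K^2) * ε := by
    intro ε hε
    obtain ⟨hε0, hεL⟩ := hε
    have haε : a < a + ε := by linarith
    have haεb : a + ε < b := by simp [hL] at hεL; linarith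
    set w : ℝ → ℝ := fun x => c * Real.cos (c * (x - a)) / Real.sin (c * (x - a)) with hw
    -- basic facts on [a+ε, b]
    have hθ : ∀ x ∈ Set.Icc (a+ε) b, c * ε ≤ c * (x - a) ∧ c * (x - a) ≤ π / 2 := by
      intro x hx
      constructor
      · nlinarith [hx.1]
      · rw [← hcL]; nlinarith [hx.2]
    have hsin : ∀ x ∈ Set.Icc (a+ε) b, 0 < Real.sin (c * (x - a)) := by
      intro x hx
      obtain ⟨h1, h2⟩ := hθ x hx
      exact Real.sin_pos_of_pos_of_lt_pi (by nlinarith) (by nlinarith)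
    -- derivative of w
    have hwderiv : ∀ x ∈ Set.Icc (a+ε) b, HasDerivAt w (-(c^2 + (w x)^2)) x := by
      intro x hx
      have hu : HasDerivAt (fun y => c * (y - a)) c x := by
        simpa using ((hasDerivAt_id x).sub_const a).const_mul c
      have hcos : HasDerivAt (fun y => Real.cos (c * (y - a)))
          (-Real.sin (c * (x - a)) * c) x := (Real.hasDerivAt_cos _).comp x hu
      have hsin' : HasDerivAt (fun y => Real.sin (c * (y - a)))
          (Real.cos (c * (x - a)) * c) x := (Real.hasDerivAt_sin _).comp x hu
      have hs := (hsin x hx).ne'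
      have : HasDerivAt (fun y => c * Real.cos (c * (y - a)) / Real.sin (c * (y - a)))
          ((c * (-Real.sin (c * (x - a)) * c) * Real.sin (c * (x - a)) - c * Real.cos (c * (x - a)) * (Real.cos (c * (x - a)) * c)) / Real.sin (c * (x - a)) ^ 2) x :=
        ((hcos.const_mul c).div hsin' hs)
      convert this using 1
      have hpyth := Real.sin_sq_add_cos_sq (c * (x - a))
      rw [hw]
      field_simp
      ring_nf
    -- the function whose derivative we integrate
    have hφderiv : ∀ x ∈ Set.Icc (a+ε) b,
        HasDerivAt (fun y => w y * (g y)^2)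
          (-(c^2 + (w x)^2) * (g x)^2 + w x * (2 * g x * g' x)) x := by
      intro x hx
      have hgx : HasDerivAt g (g' x) x :=
        hd x ⟨by linarith [hx.1], hx.2⟩
      have hg2 : HasDerivAt (fun y => (g y)^2) (2 * g x * g' x) x := by
        have : HasDerivAt (fun y => (g y)^2) ((2:ℕ) * g x ^ (2 - 1) * g' x) x := hgx.pow 2
        convert this using 1; ring
      exact (hwderiv x hx).mul hg2
    -- continuity of w on [a+ε, b]
    have hwc : ContinuousOn w (Set.Icc (a+ε) b) := by
      apply ContinuousOn.div
      · fun_prop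
      · fun_prop
      · intro x hx; exact (hsin x hx).ne'
    have hgc' : ContinuousOn g (Set.Icc (a+ε) b) :=
      hgc.mono (Set.Icc_subset_Icc (by linarith) le_rfl)
    have hg'c' : ContinuousOn g' (Set.Icc (a+ε) b) :=
      hc.mono (Set.Icc_subset_Icc (by linarith) le_rfl)
    have hDc : ContinuousOn (fun x => -(c^2 + (w x)^2) * (g x)^2 + w x * (2 * g x * g' x))
        (Set.Icc (a+ε) b) := by
      apply ContinuousOn.add
      · exact (((continuousOn_const.add (hwc.pow 2)).neg).mul (hgc'.pow 2))
      · exact hwc.mul ((continuousOn_const.mul hgc').mul hg'c')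
    have huIcc : Set.uIcc (a+ε) b = Set.Icc (a+ε) b := Set.uIcc_of_le (le_of_lt haεb)
    have hDint : IntervalIntegrable (fun x => -(c^2 + (w x)^2) * (g x)^2 + w x * (2 * g x * g' x))
        volume (a+ε) b := (hDc.mono (by rw [huIcc])).intervalIntegrable
    -- FTC
    have hFTC : (∫ x in (a+ε)..b, (-(c^2 + (w x)^2) * (g x)^2 + w x * (2 * g x * g' x)))
        = w b * (g b)^2 - w (a+ε) * (g (a+ε))^2 := by
      rw [intervalIntegral.integral_eq_sub_of_hasDerivAt (fun x hx => hφderiv x (huIcc ▸ hx)) hDint]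
    have hwb : w b = 0 := by
      have h2 : c * (b - a) = π / 2 := by rw [← hcL]
      simp [hw, h2, Real.cos_pi_div_two]
    -- pointwise inequality
    have hpt : ∀ x ∈ Set.Icc (a+ε) b,
        0 ≤ (g' x)^2 - c^2 * (g x)^2 -
          (-(c^2 + (w x)^2) * (g x)^2 + w x * (2 * g x * g' x)) := by
      intro x hx
      nlinarith [sq_nonneg (g' x - w x * g x)]
    have hnn : 0 ≤ ∫ x in (a+ε)..b, ((g' x)^2 - c^2 * (g x)^2 -
        (-(c^2 + (w x)^2) * (g x)^2 + w x * (2 * g x * g' x))) :=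
      intervalIntegral.integral_nonneg (le_of_lt haεb) hpt
    have hig2' := hig2 (a+ε) b (by linarith) (by linarith) le_rfl
    have hig'2' := hig'2 (a+ε) b (by linarith) (by linarith) le_rfl
    rw [intervalIntegral.integral_sub (hig'2'.sub (hig2'.const_mul (c^2))) hDint,
        intervalIntegral.integral_sub hig'2' (hig2'.const_mul (c^2)),
        intervalIntegral.integral_const_mul, hFTC, hwb] at hnn
    simp only [zero_mul, zero_sub, sub_neg_eq_add] at hnn
    -- split the full integrals
    have hsplit2 : (∫ x in a..b, (g x)^2)
        = (∫ x in a..(a+ε), (g x)^2) + ∫ x in (a+ε)..b, (g x)^2 := by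
      rw [intervalIntegral.integral_add_adjacent_intervals
        (hig2 a (a+ε) le_rfl (by linarith) (by linarith))
        (hig2 (a+ε) b (by linarith) (by linarith) le_rfl)]
    have hsplit2' : (∫ x in a..b, (g' x)^2)
        = (∫ x in a..(a+ε), (g' x)^2) + ∫ x in (a+ε)..b, (g' x)^2 := by
      rw [intervalIntegral.integral_add_adjacent_intervals
        (hig'2 a (a+ε) le_rfl (by linarith) (by linarith))
        (hig'2 (a+ε) b (by linarith) (by linarith) le_rfl)]
    have htail : ∫ x in a..(a+ε), (g x)^2 ≤ K^2 * ε := by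
      have h1 : ∀ x ∈ Set.uIoc a (a+ε), ‖(g x)^2‖ ≤ K^2 := by
        intro x hx
        rw [Set.uIoc_of_le (le_of_lt haε)] at hx
        have hxm : x ∈ Set.Icc a b := ⟨le_of_lt hx.1, by linarith [hx.2]⟩
        have h2 := hK x hxm
        rw [Real.norm_eq_abs] at h2 ⊢
        rw [abs_of_nonneg (sq_nonneg _)]
        nlinarith [abs_nonneg (g x), sq_abs (g x)]
      calc (∫ x in a..(a+ε), (g x)^2) ≤ ‖∫ x in a..(a+ε), (g x)^2‖ := le_abs_self _
        _ ≤ K^2 * |a + ε - a| := intervalIntegral.norm_integral_le_of_norm_le_const h1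
        _ = K^2 * ε := by rw [show a + ε - a = ε by ring, abs_of_pos hε0]
    have hhead : 0 ≤ ∫ x in a..(a+ε), (g' x)^2 :=
      intervalIntegral.integral_nonneg (le_of_lt haε) (fun x _ => sq_nonneg _)
    -- bound |g(a+ε)|
    have hgaε : |g (a+ε)| ≤ M * ε := by
      have hFTC2 : (∫ x in a..(a+ε), g' x) = g (a+ε) - g a := by
        apply intervalIntegral.integral_eq_sub_of_hasDerivAt
        · intro x hx
          rw [Set.uIcc_of_le (le_of_lt haε)] at hx
          exact hd x ⟨hx.1, by linarith [hx.2]⟩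
        · exact (hc.mono (hsub a (a+ε) le_rfl (by linarith) (by linarith))).intervalIntegrable
      have h1 : ∀ x ∈ Set.uIoc a (a+ε), ‖g' x‖ ≤ M := by
        intro x hx
        rw [Set.uIoc_of_le (le_of_lt haε)] at hx
        exact hM x ⟨le_of_lt hx.1, by linarith [hx.2]⟩
      have h2 := intervalIntegral.norm_integral_le_of_norm_le_const h1
      rw [hFTC2, hga, sub_zero, show a + ε - a = ε by ring, abs_of_pos hε0] at h2
      simpa [Real.norm_eq_abs] using h2
    -- bound w(a+ε)
    have hθε : c * (a + ε - a) = c * ε := by ring_nf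
    have hsinaε : 0 < Real.sin (c * ε) := by
      have := hsin _ (⟨le_rfl, le_of_lt haεb⟩ : a + ε ∈ Set.Icc (a+ε) b)
      rwa [hθε] at this
    have hcε2 : c * ε < π / 2 := by
      have := mul_lt_mul_of_pos_left hεL hcpos
      rwa [hcL] at this
    have hcosaε : 0 < Real.cos (c * ε) :=
      Real.cos_pos_of_mem_Ioo ⟨by nlinarith, hcε2⟩
    have htanlb := Real.lt_tan (by positivity : 0 < c * ε) hcε2
    rw [Real.tan_eq_sin_div_cos, lt_div_iff₀ hcosaε] at htanlb
    have hwaε : w (a+ε) = c * Real.cos (c * ε) / Real.sin (c * ε) := by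
      simp only [hw]; rw [hθε]
    have hwaε_pos : 0 ≤ w (a+ε) := by rw [hwaε]; positivity
    have hwle : w (a+ε) ≤ 1 / ε := by
      rw [hwaε, div_le_div_iff₀ hsinaε hε0]
      nlinarith
    have hg2b : (g (a+ε))^2 ≤ M^2 * ε^2 := by
      nlinarith [sq_abs (g (a+ε)), abs_nonneg (g (a+ε))]
    have hwg : w (a+ε) * (g (a+ε))^2 ≤ M^2 * ε := by
      have h1 : w (a+ε) * (g (a+ε))^2 ≤ (1/ε) * (M^2 * ε^2) :=
        mul_le_mul hwle hg2b (sq_nonneg _) (by positivity)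
      have h2 : (1/ε) * (M^2 * ε^2) = M^2 * ε := by field_simp
      linarith
    -- combine
    have hc2tail : c^2 * (∫ x in a..(a+ε), (g x)^2) ≤ c^2 * (K^2 * ε) :=
      mul_le_mul_of_nonneg_left htail (sq_nonneg c)
    nlinarith [hnn, hsplit2, hsplit2', hhead, hwg, hc2tail,
      mul_le_mul_of_nonneg_left (le_refl (∫ x in (a+ε)..b, (g x)^2)) (sq_nonneg c)]
  -- pass to the limit ε → 0
  set A := c ^ 2 * ∫ x in a..b, (g x) ^ 2 with hA
  set B := ∫ x in a..b, (g' x) ^ 2 with hB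
  have hC0 : (0:ℝ) ≤ M^2 + c^2*K^2 := by positivity
  have hfinal : A ≤ B := by
    by_contra hcon
    push_neg at hcon
    set C := M^2 + c^2*K^2 with hCdef
    set ε := min (L/2) ((A - B)/(2*(C+1))) with hε
    have hεpos : 0 < ε := by
      apply lt_min (by linarith)
      apply div_pos (by linarith) (by linarith)
    have hεL : ε < L := lt_of_le_of_lt (min_le_left _ _) (by linarith)
    have := key ε ⟨hεpos, hεL⟩
    have hεle : ε ≤ (A - B)/(2*(C+1)) := min_le_right _ _
    have h4 : ε * (2*(C+1)) ≤ A - B := by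
      rw [le_div_iff₀ (by linarith : (0:ℝ) < 2*(C+1))] at hεle
      exact hεle
    nlinarith [h4, this, hεpos, hC0]
  exact hfinal

-- reflected: value 0 at RIGHT endpoint
lemma poincare_right_zero (a b : ℝ) (hab : a < b) (g g' : ℝ → ℝ)
    (hd : ∀ x ∈ Set.Icc a b, HasDerivAt g (g' x) x)
    (hc : ContinuousOn g' (Set.Icc a b)) (hgb : g b = 0) :
    (π / (2 * (b - a))) ^ 2 * ∫ x in a..b, (g x) ^ 2 ≤ ∫ x in a..b, (g' x) ^ 2 := by
  have hmem : ∀ x ∈ Set.Icc a b, a + b - x ∈ Set.Icc a b := by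
    intro x hx; exact ⟨by linarith [hx.2], by linarith [hx.1]⟩
  have hrefl : ∀ x : ℝ, HasDerivAt (fun y : ℝ => a + b - y) (-1) x := by
    intro x; simpa using (hasDerivAt_id x).const_sub (a+b)
  have hd' : ∀ x ∈ Set.Icc a b, HasDerivAt (fun y => g (a + b - y)) (-(g' (a + b - x))) x := by
    intro x hx
    have := (hd (a+b-x) (hmem x hx)).comp x (hrefl x)
    simpa [mul_comm, Function.comp_def] using this
  have hc' : ContinuousOn (fun x => -(g' (a + b - x))) (Set.Icc a b) := by
    apply ContinuousOn.neg
    exact hc.comp (by fun_prop) (fun x hx => hmem x hx)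
  have h0 : (fun y => g (a + b - y)) a = 0 := by simp [hgb]
  have hmain := poincare_left_zero a b hab (fun y => g (a + b - y))
    (fun x => -(g' (a + b - x))) hd' hc' h0
  have e1 : (∫ x in a..b, (g (a + b - x)) ^ 2) = ∫ x in a..b, (g x) ^ 2 := by
    have h4 := intervalIntegral.integral_comp_sub_left (a := a) (b := b) (fun y => (g y) ^ 2) (a + b)
    simpa using h4
  have e2 : (∫ x in a..b, (-(g' (a + b - x))) ^ 2) = ∫ x in a..b, (g' x) ^ 2 := by
    have h3 : ∀ x : ℝ, (-(g' (a + b - x))) ^ 2 = (fun y => (g' y)^2) (a + b - x) := by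
      intro x; simp [neg_pow]
    simp_rw [h3]
    have h4 := intervalIntegral.integral_comp_sub_left (a := a) (b := b) (fun y => (g' y) ^ 2) (a + b)
    simpa using h4
  rw [e1, e2] at hmain
  exact hmain

-- midpoint error bound on a single interval
lemma midpoint_interval_bound (p q : ℝ) (hpq : p < q) (f f' : ℝ → ℝ)
    (hd : ∀ x ∈ Set.Icc p q, HasDerivAt f (f' x) x)
    (hc : ContinuousOn f' (Set.Icc p q)) :
    ∫ x in p..q, (f x - f ((p + q) / 2)) ^ 2
      ≤ ((q - p) / π) ^ 2 * ∫ x in p..q, (f' x) ^ 2 := by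
  have hπ : (0:ℝ) < π := Real.pi_pos
  set s : ℝ := (p + q) / 2 with hs
  have hps : p < s := by simp [hs]; linarith
  have hsq : s < q := by simp [hs]; linarith
  set g : ℝ → ℝ := fun x => f x - f s with hg
  have hdg : ∀ x ∈ Set.Icc p q, HasDerivAt g (f' x) x :=
    fun x hx => (hd x hx).sub_const _
  have hgc : ContinuousOn g (Set.Icc p q) :=
    fun x hx => ((hdg x hx).continuousAt).continuousWithinAt
  have hsubL : Set.Icc p s ⊆ Set.Icc p q := Set.Icc_subset_Icc le_rfl (le_of_lt hsq)
  have hsubR : Set.Icc s q ⊆ Set.Icc p q := Set.Icc_subset_Icc (le_of_lt hps) le_rfl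
  have hgs : g s = 0 := by simp [hg]
  have hleft := poincare_right_zero p s hps g f'
    (fun x hx => hdg x (hsubL hx)) (hc.mono hsubL) hgs
  have hright := poincare_left_zero s q hsq g f'
    (fun x hx => hdg x (hsubR hx)) (hc.mono hsubR) hgs
  have hcL : 2 * (s - p) = q - p := by simp [hs]; ring
  have hcR : 2 * (q - s) = q - p := by simp [hs]; ring
  rw [hcL] at hleft
  rw [hcR] at hright
  -- integrability for splitting
  have higL : IntervalIntegrable (fun x => (g x)^2) volume p s :=
    (((hgc.mono hsubL).pow 2).mono (by rw [Set.uIcc_of_le (le_of_lt hps)])).intervalIntegrable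
  have higR : IntervalIntegrable (fun x => (g x)^2) volume s q :=
    (((hgc.mono hsubR).pow 2).mono (by rw [Set.uIcc_of_le (le_of_lt hsq)])).intervalIntegrable
  have hig'L : IntervalIntegrable (fun x => (f' x)^2) volume p s :=
    (((hc.mono hsubL).pow 2).mono (by rw [Set.uIcc_of_le (le_of_lt hps)])).intervalIntegrable
  have hig'R : IntervalIntegrable (fun x => (f' x)^2) volume s q :=
    (((hc.mono hsubR).pow 2).mono (by rw [Set.uIcc_of_le (le_of_lt hsq)])).intervalIntegrable
  have hsplitg : (∫ x in p..q, (g x)^2) = (∫ x in p..s, (g x)^2) + ∫ x in s..q, (g x)^2 :=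
    (intervalIntegral.integral_add_adjacent_intervals higL higR).symm
  have hsplitf : (∫ x in p..q, (f' x)^2) = (∫ x in p..s, (f' x)^2) + ∫ x in s..q, (f' x)^2 :=
    (intervalIntegral.integral_add_adjacent_intervals hig'L hig'R).symm
  have hsum : (π / (q - p)) ^ 2 * ∫ x in p..q, (g x)^2 ≤ ∫ x in p..q, (f' x)^2 := by
    rw [hsplitg, hsplitf, mul_add]
    exact add_le_add hleft hright
  -- convert to the desired form
  have hqp : 0 < q - p := by linarith
  have hpos : (0:ℝ) < (π / (q - p)) ^ 2 := by positivity
  have hkey : ∫ x in p..q, (g x)^2 ≤ ((q - p) / π) ^ 2 * ∫ x in p..q, (f' x)^2 := by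
    have h1 : ((q - p) / π) ^ 2 * ((π / (q - p)) ^ 2 * ∫ x in p..q, (g x)^2)
        ≤ ((q - p) / π) ^ 2 * ∫ x in p..q, (f' x)^2 :=
      mul_le_mul_of_nonneg_left hsum (by positivity)
    have h2 : ((q - p) / π) ^ 2 * ((π / (q - p)) ^ 2 * ∫ x in p..q, (g x)^2)
        = ∫ x in p..q, (g x)^2 := by
      rw [← mul_assoc]
      have : ((q - p) / π) ^ 2 * (π / (q - p)) ^ 2 = 1 := by
        field_simp
      rw [this, one_mul]
    linarith
  simpa [hg, hs] using hkey

/-- Local, energy-based sufficient condition: if on each sampling interval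
`T_n² D_n ≤ α π² E_n`, then the total midpoint approximation error is bounded
by `α ∫ f²`. -/
theorem local_energy_convergence_condition
    (N : ℕ) (hN : 1 ≤ N) (t : ℕ → ℝ)
    (ht : ∀ n < N, t n < t (n + 1))
    (f f' : ℝ → ℝ)
    (hderiv : ∀ x ∈ Set.Icc (t 0) (t N), HasDerivAt f (f' x) x)
    (hcont : ContinuousOn f' (Set.Icc (t 0) (t N)))
    (α : ℝ) (hα : 0 < α)
    (hlocal : ∀ n < N,
      (t (n + 1) - t n) ^ 2 * (∫ x in (t n)..(t (n + 1)), (f' x) ^ 2)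
        ≤ α * π ^ 2 * ∫ x in (t n)..(t (n + 1)), (f x) ^ 2) :
    ∑ n ∈ Finset.range N,
        ∫ x in (t n)..(t (n + 1)), (f x - f ((t n + t (n + 1)) / 2)) ^ 2
      ≤ α * ∫ x in (t 0)..(t N), (f x) ^ 2 := by
  have hπ : (0:ℝ) < π := Real.pi_pos
  -- monotonicity of t on [0, N]
  have hmon : ∀ i j : ℕ, i ≤ j → j ≤ N → t i ≤ t j := by
    intro i j hij hjN
    induction j with
    | zero => simp_all
    | succ m ih =>
      rcases Nat.lt_or_ge i (m + 1) with h | h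
      · exact le_trans (ih (by omega) (by omega)) (le_of_lt (ht m (by omega)))
      · have : i = m + 1 := by omega
        simp [this]
  have hfc : ContinuousOn f (Set.Icc (t 0) (t N)) :=
    fun x hx => ((hderiv x hx).continuousAt).continuousWithinAt
  have hsub : ∀ n < N, Set.Icc (t n) (t (n + 1)) ⊆ Set.Icc (t 0) (t N) := by
    intro n hn
    exact Set.Icc_subset_Icc (hmon 0 n (by omega) (by omega)) (hmon (n+1) N (by omega) le_rfl)
  -- per-interval bound
  have per_n : ∀ n < N,
      (∫ x in (t n)..(t (n + 1)), (f x - f ((t n + t (n + 1)) / 2)) ^ 2)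
        ≤ α * ∫ x in (t n)..(t (n + 1)), (f x) ^ 2 := by
    intro n hn
    have hpq := ht n hn
    have h1 := midpoint_interval_bound (t n) (t (n + 1)) hpq f f'
      (fun x hx => hderiv x (hsub n hn hx)) (hcont.mono (hsub n hn))
    have h2 := hlocal n hn
    have h3 : ((t (n + 1) - t n) / π) ^ 2 * (∫ x in (t n)..(t (n + 1)), (f' x) ^ 2)
        ≤ α * ∫ x in (t n)..(t (n + 1)), (f x) ^ 2 := by
      rw [div_pow, div_mul_eq_mul_div, div_le_iff₀ (by positivity : (0:ℝ) < π ^ 2)]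
      nlinarith [h2]
    linarith
  -- sum over intervals
  have hint : ∀ k < N, IntervalIntegrable (fun x => (f x) ^ 2) volume (t k) (t (k + 1)) := by
    intro k hk
    have huIcc : Set.uIcc (t k) (t (k + 1)) = Set.Icc (t k) (t (k + 1)) :=
      Set.uIcc_of_le (le_of_lt (ht k hk))
    exact (((hfc.mono (hsub k hk)).pow 2).mono (by rw [huIcc])).intervalIntegrable
  calc ∑ n ∈ Finset.range N,
        ∫ x in (t n)..(t (n + 1)), (f x - f ((t n + t (n + 1)) / 2)) ^ 2
      ≤ ∑ n ∈ Finset.range N, α * ∫ x in (t n)..(t (n + 1)), (f x) ^ 2 :=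
        Finset.sum_le_sum (fun n hn => per_n n (Finset.mem_range.mp hn))
    _ = α * ∑ n ∈ Finset.range N, ∫ x in (t n)..(t (n + 1)), (f x) ^ 2 := by
        rw [Finset.mul_sum]
    _ = α * ∫ x in (t 0)..(t N), (f x) ^ 2 := by
        rw [intervalIntegral.sum_integral_adjacent_intervals hint]
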